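/- Consider the Plackett–Luce ranking model with parameter θ on values x_1, ..., x_n, generated by sequentially choosing the next-ranked remaining candidate i with probability exp(θ x_i)/∑_{j ∈ S} exp(θ x_j) where S is the set of remaining candidates. If π and σ are two i.i.d. Plackett–Luce rankings, then E[(π_1 − π_2)·1{π_1 ≠ σ_1}] = 0. -/

import Mathlib

open Finset

/-- Probability of the ranking `π` (mapping positions to items) under the
Plackett–Luce model with parameter `θ` on values `x`: the candidate placed at
each position `k` is chosen among the remaining candidates (those placed at
position `k` or later) with probability proportional to `exp (θ * x ·)`. -/
noncomputable def plProb {n : ℕ} (θ : ℝ) (x : Fin n → ℝ)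
    (π : Equiv.Perm (Fin n)) : ℝ :=
  ∏ k : Fin n,
    Real.exp (θ * x (π k)) /
      ∑ j ∈ Finset.univ.filter (fun j : Fin n => k ≤ π.symm j),
        Real.exp (θ * x j)

noncomputable def plG {n : ℕ} (v : Fin n → ℝ) : ℝ :=
  ∏ k : Fin n, v k / ∑ m ∈ Finset.univ.filter (fun m : Fin n => k ≤ m), v m

lemma plG_succ {n : ℕ} (u : Fin (n+1) → ℝ) :
    plG u = (u 0 / ∑ m, u m) * plG (u ∘ Fin.succ) := by
  unfold plG
  rw [Fin.prod_univ_succ]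
  congr 1
  · congr 1
    apply Finset.sum_congr _ (fun _ _ => rfl)
    ext m; simp [Fin.zero_le]
  · apply Finset.prod_congr rfl
    intro i _
    congr 1
    rw [Finset.sum_filter, Finset.sum_filter, Fin.sum_univ_succ]
    simp [Fin.le_zero_iff, Fin.succ_le_succ_iff]

lemma plG_decomp {n : ℕ} (v : Fin (n+1) → ℝ) (a : Fin (n+1)) (e : Equiv.Perm (Fin n)) :
    plG (v ∘ (Equiv.Perm.decomposeFin.symm (a, e))) =
      (v a / ∑ m, v m) * plG ((fun i => v (Equiv.swap 0 a i.succ)) ∘ e) := by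
  rw [plG_succ]
  congr 1
  · congr 1
    · simp
    · exact Equiv.sum_comp _ v
  · congr 1
    funext i
    simp [Equiv.Perm.decomposeFin_symm_apply_succ]

lemma plG_norm : ∀ (n : ℕ) (v : Fin n → ℝ), (∀ i, 0 < v i) →
    ∑ π : Equiv.Perm (Fin n), plG (v ∘ π) = 1 := by
  intro n
  induction n with
  | zero =>
    intro v hv
    simp [plG]
  | succ n ih =>
    intro v hv
    have hS : (0:ℝ) < ∑ m, v m := Finset.sum_pos (fun i _ => hv i) ⟨0, by simp⟩
    rw [← Equiv.sum_comp (Equiv.Perm.decomposeFin).symm, Fintype.sum_prod_type]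
    have : ∀ a : Fin (n+1),
        ∑ e : Equiv.Perm (Fin n), plG (v ∘ (Equiv.Perm.decomposeFin.symm (a, e)))
          = v a / ∑ m, v m := by
      intro a
      simp_rw [plG_decomp]
      rw [← Finset.mul_sum, ih _ (fun i => hv _), mul_one]
    simp_rw [this]
    rw [← Finset.sum_div, div_eq_one_iff_eq (ne_of_gt hS)]

lemma plG_first {n : ℕ} (v : Fin (n+1) → ℝ) (hv : ∀ i, 0 < v i) (a : Fin (n+1)) :
    ∑ π : Equiv.Perm (Fin (n+1)), (if π 0 = a then plG (v ∘ π) else 0)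
      = v a / ∑ m, v m := by
  rw [← Equiv.sum_comp (Equiv.Perm.decomposeFin).symm, Fintype.sum_prod_type]
  have h1 : ∀ p : Fin (n+1), ∀ e : Equiv.Perm (Fin n),
      (if (Equiv.Perm.decomposeFin.symm (p, e)) 0 = a
        then plG (v ∘ (Equiv.Perm.decomposeFin.symm (p, e))) else 0)
      = if p = a then plG (v ∘ (Equiv.Perm.decomposeFin.symm (p, e))) else 0 := by
    intro p e; simp
  simp_rw [h1]
  rw [Finset.sum_eq_single a]
  · simp only [if_true, eq_self_iff_true]
    simp_rw [plG_decomp]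
    rw [← Finset.mul_sum, plG_norm _ _ (fun i => hv _), mul_one]
  · intro b _ hb
    simp [hb]
  · simp

lemma plG_swap {m : ℕ} (u : Fin (m+2) → ℝ) (hu : ∀ i, 0 < u i) :
    plG (u ∘ (Equiv.swap (0 : Fin (m+2)) 1)) * ((∑ j, u j) - u 1)
      = plG u * ((∑ j, u j) - u 0) := by
  have hsum2 : ∀ w : Fin (m+2) → ℝ, ∑ i : Fin (m+1), w i.succ = (∑ j, w j) - w 0 := by
    intro w
    rw [show (∑ j, w j) = w 0 + ∑ i : Fin (m+1), w i.succ from Fin.sum_univ_succ w]; ring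
  have htail : (u ∘ (Equiv.swap (0 : Fin (m+2)) 1)) ∘ Fin.succ ∘ Fin.succ
      = u ∘ Fin.succ ∘ Fin.succ := by
    funext i
    have h0 : (i.succ.succ : Fin (m+2)) ≠ 0 := Fin.succ_ne_zero _
    have h1 : (i.succ.succ : Fin (m+2)) ≠ 1 := by
      rw [← Fin.succ_zero_eq_one]
      exact fun h => Fin.succ_ne_zero i (Fin.succ_injective _ h)
    simp [Function.comp, Equiv.swap_apply_of_ne_of_ne h0 h1]
  have hS0 : (0:ℝ) < (∑ j, u j) - u 0 := by
    rw [← hsum2]; exact Finset.sum_pos (fun i _ => hu _) ⟨0, by simp⟩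
  have hS1 : (0:ℝ) < (∑ j, u j) - u 1 := by
    have := Equiv.sum_comp (Equiv.swap (0 : Fin (m+2)) 1) u
    have h2 : (∑ j, u j) - u 1 = ∑ i : Fin (m+1), (u ∘ (Equiv.swap (0 : Fin (m+2)) 1)) i.succ := by
      rw [hsum2 (u ∘ (Equiv.swap (0 : Fin (m+2)) 1))]
      simp [this]
    rw [h2]; exact Finset.sum_pos (fun i _ => hu _) ⟨0, by simp⟩
  have hS : (0:ℝ) < ∑ j, u j := Finset.sum_pos (fun i _ => hu i) ⟨0, by simp⟩
  rw [plG_succ u, plG_succ (u ∘ Fin.succ), plG_succ (u ∘ (Equiv.swap (0 : Fin (m+2)) 1)),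
    plG_succ ((u ∘ (Equiv.swap (0 : Fin (m+2)) 1)) ∘ Fin.succ)]
  have e1 : ((u ∘ (Equiv.swap (0 : Fin (m+2)) 1)) ∘ Fin.succ) ∘ Fin.succ
      = (u ∘ Fin.succ) ∘ Fin.succ := htail
  rw [e1]
  have c1 : (u ∘ (Equiv.swap (0 : Fin (m+2)) 1)) 0 = u 1 := by simp
  have c2 : ((u ∘ (Equiv.swap (0 : Fin (m+2)) 1)) ∘ Fin.succ) 0 = u 0 := by
    simp [Function.comp, Fin.succ_zero_eq_one]
  have c3 : ((u ∘ Fin.succ)) 0 = u 1 := by simp [Fin.succ_zero_eq_one]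
  have c4 : (∑ mm, (u ∘ (Equiv.swap (0 : Fin (m+2)) 1)) mm) = ∑ j, u j :=
    Equiv.sum_comp _ u
  have c5 : (∑ mm, ((u ∘ (Equiv.swap (0 : Fin (m+2)) 1)) ∘ Fin.succ) mm)
      = (∑ j, u j) - u 1 := by
    rw [show (∑ mm, ((u ∘ (Equiv.swap (0 : Fin (m+2)) 1)) ∘ Fin.succ) mm)
        = ∑ i : Fin (m+1), (u ∘ (Equiv.swap (0 : Fin (m+2)) 1)) i.succ from rfl,
      hsum2 (u ∘ (Equiv.swap (0 : Fin (m+2)) 1)), c4, c1]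
  have c6 : (∑ mm, (u ∘ Fin.succ) mm) = (∑ j, u j) - u 0 := by
    rw [show (∑ mm, (u ∘ Fin.succ) mm) = ∑ i : Fin (m+1), u i.succ from rfl, hsum2 u]
  rw [c1, c2, c3, c4, c5, c6]
  field_simp

lemma plProb_eq_plG {n : ℕ} (θ : ℝ) (x : Fin n → ℝ) (π : Equiv.Perm (Fin n)) :
    plProb θ x π = plG ((fun j => Real.exp (θ * x j)) ∘ π) := by
  unfold plProb plG
  apply Finset.prod_congr rfl
  intro k _
  congr 1
  refine (Finset.sum_equiv (π : Fin n ≃ Fin n) ?_ ?_).symm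
  · intro i
    simp [Equiv.symm_apply_apply]
  · intro i _
    rfl

theorem stmt_14 (n : ℕ) (hn : 2 ≤ n) (θ : ℝ) (x : Fin n → ℝ) :
    ∑ π : Equiv.Perm (Fin n), ∑ σ : Equiv.Perm (Fin n),
      plProb θ x π * plProb θ x σ *
        ((x (π ⟨0, by omega⟩) - x (π ⟨1, by omega⟩)) *
          (if π ⟨0, by omega⟩ ≠ σ ⟨0, by omega⟩ then (1 : ℝ) else 0)) = 0 := by
  obtain ⟨m, rfl⟩ : ∃ m, n = m + 2 := ⟨n - 2, by omega⟩
  set w : Fin (m+2) → ℝ := fun j => Real.exp (θ * x j) with hw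
  have hwpos : ∀ i, 0 < w i := fun i => Real.exp_pos _
  set S : ℝ := ∑ j, w j with hS
  have hSpos : 0 < S := Finset.sum_pos (fun i _ => hwpos i) ⟨0, by simp⟩
  simp only [Fin.mk_zero, Fin.mk_one, plProb_eq_plG, ← hw]
  have hσ : ∀ a : Fin (m+2),
      ∑ σ : Equiv.Perm (Fin (m+2)), plG (w ∘ σ) * (if a ≠ σ 0 then (1:ℝ) else 0)
        = (S - w a) / S := by
    intro a
    have h1 : ∀ σ : Equiv.Perm (Fin (m+2)),
        plG (w ∘ σ) * (if a ≠ σ 0 then (1:ℝ) else 0)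
          = plG (w ∘ σ) - (if σ 0 = a then plG (w ∘ σ) else 0) := by
      intro σ
      by_cases h : σ 0 = a
      · simp [h]
      · rw [if_pos (fun hh => h hh.symm), if_neg h]; ring
    simp_rw [h1]
    rw [Finset.sum_sub_distrib, plG_norm _ _ hwpos, plG_first _ hwpos a, ← hS]
    field_simp
  have step1 : ∀ π : Equiv.Perm (Fin (m+2)),
      ∑ σ : Equiv.Perm (Fin (m+2)),
        plG (w ∘ π) * plG (w ∘ σ) *
          ((x (π 0) - x (π 1)) * (if π 0 ≠ σ 0 then (1:ℝ) else 0))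
        = plG (w ∘ π) * (x (π 0) - x (π 1)) * ((S - w (π 0)) / S) := by
    intro π
    rw [← hσ (π 0), Finset.mul_sum]
    apply Finset.sum_congr rfl
    intro σ _
    ring
  refine (Finset.sum_congr rfl (fun π _ => step1 π)).trans ?_
  -- now the involution
  have key : ∀ π : Equiv.Perm (Fin (m+2)),
      plG (w ∘ (π * Equiv.swap (0 : Fin (m+2)) 1)) *
          (x ((π * Equiv.swap (0 : Fin (m+2)) 1) 0) - x ((π * Equiv.swap (0 : Fin (m+2)) 1) 1)) *
          ((S - w ((π * Equiv.swap (0 : Fin (m+2)) 1) 0)) / S)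
        = -(plG (w ∘ π) * (x (π 0) - x (π 1)) * ((S - w (π 0)) / S)) := by
    intro π
    have e0 : (π * Equiv.swap (0 : Fin (m+2)) 1) 0 = π 1 := by
      simp [Equiv.Perm.mul_apply]
    have e1 : (π * Equiv.swap (0 : Fin (m+2)) 1) 1 = π 0 := by
      simp [Equiv.Perm.mul_apply]
    have ec : w ∘ ⇑(π * Equiv.swap (0 : Fin (m+2)) 1)
        = (w ∘ ⇑π) ∘ (Equiv.swap (0 : Fin (m+2)) 1) := rfl
    have hA := plG_swap (w ∘ ⇑π) (fun i => hwpos _)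
    have hsc : (∑ j, (w ∘ ⇑π) j) = S := Equiv.sum_comp π w
    rw [hsc] at hA
    have hc0 : (w ∘ ⇑π) 0 = w (π 0) := rfl
    have hc1 : (w ∘ ⇑π) 1 = w (π 1) := rfl
    rw [hc0, hc1] at hA
    rw [e0, e1, ec]
    linear_combination ((x (π 1) - x (π 0)) / S) * hA
  have reindex := Equiv.sum_comp (Equiv.mulRight (Equiv.swap (0 : Fin (m+2)) 1))
    (fun π : Equiv.Perm (Fin (m+2)) =>
      plG (w ∘ π) * (x (π 0) - x (π 1)) * ((S - w (π 0)) / S))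
  simp only [Equiv.coe_mulRight] at reindex
  have : ∑ π : Equiv.Perm (Fin (m+2)),
      plG (w ∘ π) * (x (π 0) - x (π 1)) * ((S - w (π 0)) / S)
      = -∑ π : Equiv.Perm (Fin (m+2)),
        plG (w ∘ π) * (x (π 0) - x (π 1)) * ((S - w (π 0)) / S) := by
    conv_lhs => rw [← reindex]
    rw [← Finset.sum_neg_distrib]
    exact Finset.sum_congr rfl (fun π _ => key π)
  linarith
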